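/- Let N ≥ 1 and let ω be the standard symplectic form on ℂ^{2N}. Let W be the complex vector space of symmetric bilinear maps B : ℂ^{2N} × ℂ^{2N} → ℂ^{2N} such that for every v ∈ ℂ^{2N} the endomorphism w ↦ B(v,w) lies in sp(2N,ℂ), i.e. ω(B(v,w),u) + ω(w,B(v,u)) = 0 for all w,u. With the action of sp(2N,ℂ) given by (x·B)(v,w) = x(B(v,w)) − B(x v, w) − B(v, x w), W is a nonzero irreducible sp(2N,ℂ)-module: its only Lie submodules are 0 and W. -/

import Mathlib

open Finset

namespace SpIrr
noncomputable section

variable {N : ℕ}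

abbrev I (N : ℕ) := Fin N ⊕ Fin N
abbrev Vv (N : ℕ) := I N → ℂ
abbrev Tn (N : ℕ) := I N → I N → I N → ℂ

def sw : I N → I N := Sum.swap

@[simp] lemma sw_sw (k : I N) : sw (sw k) = k := Sum.swap_swap k

lemma sw_eq_iff {k c : I N} : sw k = c ↔ k = sw c := by
  constructor
  · rintro rfl; simp
  · rintro rfl; simp

@[simp] lemma sw_inl (i : Fin N) : sw (Sum.inl i : I N) = Sum.inr i := rfl
@[simp] lemma sw_inr (i : Fin N) : sw (Sum.inr i : I N) = Sum.inl i := rfl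

def eps : I N → ℂ := Sum.elim (fun _ => 1) (fun _ => -1)

@[simp] lemma eps_inl (i : Fin N) : eps (Sum.inl i : I N) = 1 := rfl
@[simp] lemma eps_inr (i : Fin N) : eps (Sum.inr i : I N) = -1 := rfl

lemma eps_sw (k : I N) : eps (sw k) = -eps k := by cases k <;> simp
lemma eps_mul_self (k : I N) : eps k * eps k = 1 := by cases k <;> simp
lemma eps_ne_zero (k : I N) : eps k ≠ 0 := by cases k <;> simp

/-- the symplectic form -/
def om (v w : Vv N) : ℂ := ∑ k, eps k * v k * w (sw k)

lemma sum_sw (f : I N → ℂ) : ∑ k, f (sw k) = ∑ k, f k :=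
  Fintype.sum_equiv (Equiv.sumComm (Fin N) (Fin N)) _ _ (fun _ => rfl)

lemma om_antisymm (v w : Vv N) : om v w = -om w v := by
  have h : om w v = ∑ k, eps (sw k) * w (sw k) * v k := by
    rw [om, ← sum_sw (fun k => eps k * w k * v (sw k))]
    simp
  rw [h, om, ← Finset.sum_neg_distrib]
  refine Finset.sum_congr rfl fun k _ => ?_
  rw [eps_sw]; ring

/-- delta basis vector -/
def dd (k : I N) : Vv N := fun r => if k = r then 1 else 0

lemma om_dd_right (u : Vv N) (m : I N) : om u (dd m) = eps (sw m) * u (sw m) := by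
  rw [om]
  have : ∀ k : I N, eps k * u k * dd m (sw k) = if k = sw m then eps (sw m) * u (sw m) else 0 := by
    intro k
    by_cases h : k = sw m
    · subst h; simp [dd]
    · have : ¬ (m = sw k) := by
        intro hh; apply h; rw [hh]; simp
      simp [dd, this, h]
  rw [Finset.sum_congr rfl fun k _ => this k, Finset.sum_ite_eq']
  simp

lemma om_eq_zero_iff (u : Vv N) (h : ∀ m, om u (dd m) = 0) : u = 0 := by
  funext r
  have := h (sw r)
  rw [om_dd_right] at this
  simp only [sw_sw] at this
  rcases mul_eq_zero.mp this with h1 | h1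
  · exact absurd h1 (eps_ne_zero r)
  · simpa using h1


section Bdefs

def dz (i : Fin N) : I N → ℤ :=
  Sum.elim (fun j => if j = i then 1 else 0) (fun j => if j = i then -1 else 0)

def wt3 (i : Fin N) (k l m : I N) : ℤ := dz i k + dz i l + dz i m

lemma dz_bound (i : Fin N) (k : I N) : -1 ≤ dz i k ∧ dz i k ≤ 1 := by
  rcases k with j | j <;> dsimp [dz] <;> split_ifs <;> omega

lemma wt3_bound (i : Fin N) (k l m : I N) : -3 ≤ wt3 i k l m ∧ wt3 i k l m ≤ 3 := by
  have h1 := dz_bound i k; have h2 := dz_bound i l; have h3 := dz_bound i m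
  unfold wt3; omega

def SymT (t : Tn N) : Prop :=
  (∀ k l m, t k l m = t l k m) ∧ (∀ k l m, t k l m = t k m l)

def WV (lam : Fin N → ℤ) (t : Tn N) : Prop :=
  ∀ k l m, t k l m ≠ 0 → ∀ i, wt3 i k l m = lam i

def Phi (z : Fin N) (lam : Fin N → ℤ) : ℤ := ∑ i, (if i = z then 2 else 1) * lam i

def corner (w : I N) : Tn N := fun k l m =>
  (if k = w then 1 else 0) * (if l = w then 1 else 0) * (if m = w then 1 else 0)

lemma exists_ne_zero (t : Tn N) (h0 : t ≠ 0) : ∃ k l m, t k l m ≠ 0 := by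
  by_contra h; push_neg at h
  exact h0 (funext fun k => funext fun l => funext fun m => h k l m)

end Bdefs

section B

def gen (a b : ℂ) (p q : I N) : Matrix (I N) (I N) ℂ :=
  Matrix.of fun j r =>
    a * ((if j = p then 1 else 0) * (if r = q then 1 else 0)) +
    b * ((if j = sw q then 1 else 0) * (if r = sw p then 1 else 0))

lemma gen_apply (a b : ℂ) (p q j r : I N) :
    gen a b p q j r =
      a * ((if j = p then 1 else 0) * (if r = q then 1 else 0)) +
      b * ((if j = sw q then 1 else 0) * (if r = sw p then 1 else 0)) := rfl

lemma gen_mulVec (a b : ℂ) (p q : I N) (v : Vv N) :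
    (gen a b p q).mulVec v = fun j =>
      (if j = p then a * v q else 0) + (if j = sw q then b * v (sw p) else 0) := by
  funext j
  rw [Matrix.mulVec]
  simp only [dotProduct, gen_apply]
  have hpt : ∀ r : I N,
      (a * ((if j = p then 1 else 0) * (if r = q then 1 else 0)) +
        b * ((if j = sw q then 1 else 0) * (if r = sw p then 1 else 0))) * v r =
      (if r = q then (if j = p then a * v r else 0) else 0) +
      (if r = sw p then (if j = sw q then b * v r else 0) else 0) := by
    intro r; split_ifs <;> ring
  rw [Finset.sum_congr rfl fun r _ => hpt r, Finset.sum_add_distrib,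
    Finset.sum_ite_eq', Finset.sum_ite_eq']
  simp

lemma gen_sp (a b : ℂ) (p q : I N) (h : a * eps p + b * eps q = 0) (v w : Vv N) :
    om ((gen a b p q).mulVec v) w + om v ((gen a b p q).mulVec w) = 0 := by
  rw [gen_mulVec, gen_mulVec]
  simp only [om, sw_eq_iff, mul_add, add_mul, mul_ite, ite_mul, mul_zero, zero_mul,
    add_zero, zero_add, Finset.sum_add_distrib, Finset.sum_ite_eq', Finset.mem_univ,
    if_true, sw_sw]
  rw [eps_sw p, eps_sw q]
  linear_combination (v q * w (sw p) - v (sw p) * w q) * h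

def rho (x : Matrix (I N) (I N) ℂ) (t : Tn N) : Tn N := fun k l m =>
  -(∑ j, x j k * t j l m) - (∑ j, x j l * t k j m) - (∑ j, x j m * t k l j)

lemma gen_contract (a b : ℂ) (p q c : I N) (f : I N → ℂ) :
    (∑ j, gen a b p q j c * f j) =
      (if c = q then a * f p else 0) + (if c = sw p then b * f (sw q) else 0) := by
  have hpt : ∀ j : I N, gen a b p q j c * f j =
      (if j = p then (if c = q then a * f j else 0) else 0) +
      (if j = sw q then (if c = sw p then b * f j else 0) else 0) := by
    intro j; rw [gen_apply]; split_ifs <;> ring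
  rw [Finset.sum_congr rfl fun j _ => hpt j, Finset.sum_add_distrib,
    Finset.sum_ite_eq', Finset.sum_ite_eq']
  simp

lemma rho_gen (a b : ℂ) (p q : I N) (t : Tn N) (k l m : I N) :
    rho (gen a b p q) t k l m =
      -((if k = q then a * t p l m else 0) + (if k = sw p then b * t (sw q) l m else 0))
      - ((if l = q then a * t k p m else 0) + (if l = sw p then b * t k (sw q) m else 0))
      - ((if m = q then a * t k l p else 0) + (if m = sw p then b * t k l (sw q) else 0)) := by
  show -(∑ j, gen a b p q j k * t j l m) - (∑ j, gen a b p q j l * t k j m)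
      - (∑ j, gen a b p q j m * t k l j) = _
  rw [gen_contract a b p q k (fun j => t j l m), gen_contract a b p q l (fun j => t k j m),
    gen_contract a b p q m (fun j => t k l j)]

lemma rho_symT (x : Matrix (I N) (I N) ℂ) (t : Tn N) (hs : SymT t) : SymT (rho x t) := by
  obtain ⟨h12, h23⟩ := hs
  constructor
  · intro k l m
    show (-(∑ j, x j k * t j l m) - (∑ j, x j l * t k j m) - (∑ j, x j m * t k l j))
       = (-(∑ j, x j l * t j k m) - (∑ j, x j k * t l j m) - (∑ j, x j m * t l k j))
    have e1 : (∑ j, x j l * t j k m) = ∑ j, x j l * t k j m :=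
      Finset.sum_congr rfl fun j _ => by rw [h12 j k m]
    have e2 : (∑ j, x j k * t l j m) = ∑ j, x j k * t j l m :=
      Finset.sum_congr rfl fun j _ => by rw [h12 l j m]
    have e3 : (∑ j, x j m * t l k j) = ∑ j, x j m * t k l j :=
      Finset.sum_congr rfl fun j _ => by rw [h12 l k j]
    rw [e1, e2, e3]; ring
  · intro k l m
    show (-(∑ j, x j k * t j l m) - (∑ j, x j l * t k j m) - (∑ j, x j m * t k l j))
       = (-(∑ j, x j k * t j m l) - (∑ j, x j m * t k j l) - (∑ j, x j l * t k m j))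
    have e1 : (∑ j, x j k * t j m l) = ∑ j, x j k * t j l m :=
      Finset.sum_congr rfl fun j _ => by rw [h23 j l m]
    have e2 : (∑ j, x j m * t k j l) = ∑ j, x j m * t k l j :=
      Finset.sum_congr rfl fun j _ => by rw [h23 k l j]
    have e3 : (∑ j, x j l * t k m j) = ∑ j, x j l * t k j m :=
      Finset.sum_congr rfl fun j _ => by rw [h23 k j m]
    rw [e1, e2, e3]; ring

/-- the four families of symplectic matrices we use -/
def genA (i : Fin N) : Matrix (I N) (I N) ℂ := gen (1/2) (1/2) (Sum.inr i) (Sum.inl i)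
def genB (z j : Fin N) : Matrix (I N) (I N) ℂ := gen (-1) 1 (Sum.inl j) (Sum.inl z)
def genH (i : Fin N) : Matrix (I N) (I N) ℂ := gen 1 (-1) (Sum.inl i) (Sum.inl i)
def genF (z : Fin N) : Matrix (I N) (I N) ℂ := gen (1/2) (1/2) (Sum.inl z) (Sum.inr z)

lemma rho_genA (i : Fin N) (t : Tn N) (k l m : I N) :
    rho (genA i) t k l m =
      -((if k = Sum.inl i then t (Sum.inr i) l m else 0) +
        (if l = Sum.inl i then t k (Sum.inr i) m else 0) +
        (if m = Sum.inl i then t k l (Sum.inr i) else 0)) := by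
  show rho (gen (1/2) (1/2) (Sum.inr i) (Sum.inl i)) t k l m = _
  rw [rho_gen]
  simp only [sw_inr, sw_inl]
  by_cases hk : k = Sum.inl i <;> by_cases hl : l = Sum.inl i <;> by_cases hm : m = Sum.inl i <;>
    simp only [hk, hl, hm, if_true, if_false] <;> ring

lemma rho_genF (z : Fin N) (t : Tn N) (k l m : I N) :
    rho (genF z) t k l m =
      -((if k = Sum.inr z then t (Sum.inl z) l m else 0) +
        (if l = Sum.inr z then t k (Sum.inl z) m else 0) +
        (if m = Sum.inr z then t k l (Sum.inl z) else 0)) := by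
  show rho (gen (1/2) (1/2) (Sum.inl z) (Sum.inr z)) t k l m = _
  rw [rho_gen]
  simp only [sw_inr, sw_inl]
  by_cases hk : k = Sum.inr z <;> by_cases hl : l = Sum.inr z <;> by_cases hm : m = Sum.inr z <;>
    simp only [hk, hl, hm, if_true, if_false] <;> ring

lemma rho_genB (z j : Fin N) (t : Tn N) (k l m : I N) :
    rho (genB z j) t k l m =
      ((if k = Sum.inl z then t (Sum.inl j) l m else 0) +
        (if l = Sum.inl z then t k (Sum.inl j) m else 0) +
        (if m = Sum.inl z then t k l (Sum.inl j) else 0))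
      - ((if k = Sum.inr j then t (Sum.inr z) l m else 0) +
        (if l = Sum.inr j then t k (Sum.inr z) m else 0) +
        (if m = Sum.inr j then t k l (Sum.inr z) else 0)) := by
  show rho (gen (-1) 1 (Sum.inl j) (Sum.inl z)) t k l m = _
  rw [rho_gen]
  simp only [sw_inr, sw_inl]
  by_cases hk1 : k = Sum.inl z <;> by_cases hk2 : k = Sum.inr j <;>
    by_cases hl1 : l = Sum.inl z <;> by_cases hl2 : l = Sum.inr j <;>
    by_cases hm1 : m = Sum.inl z <;> by_cases hm2 : m = Sum.inr j <;>
    simp only [if_pos, if_neg, hk1, hk2, hl1, hl2, hm1, hm2, not_false_eq_true, reduceCtorEq,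
      ↓reduceIte, sub_zero, neg_zero] <;> ring

lemma dz_mulC (i : Fin N) (k : I N) (f : I N → ℂ) :
    (if k = Sum.inl i then f (Sum.inl i) else 0) +
      (if k = Sum.inr i then -f (Sum.inr i) else 0) = ((dz i k : ℤ) : ℂ) * f k := by
  rcases k with j | j <;> by_cases h : j = i <;> simp [dz, h]

lemma rho_genH (i : Fin N) (t : Tn N) (k l m : I N) :
    rho (genH i) t k l m = -(((wt3 i k l m : ℤ) : ℂ) * t k l m) := by
  show rho (gen 1 (-1) (Sum.inl i) (Sum.inl i)) t k l m = _
  rw [rho_gen]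
  simp only [sw_inl]
  have e1 := dz_mulC i k (fun r => t r l m)
  have e2 := dz_mulC i l (fun r => t k r m)
  have e3 := dz_mulC i m (fun r => t k l r)
  simp only [one_mul, neg_one_mul] at *
  rw [show (if k = Sum.inl i then t (Sum.inl i) l m else 0) +
      (if k = Sum.inr i then -t (Sum.inr i) l m else 0) = ((dz i k : ℤ) : ℂ) * t k l m from e1,
    show (if l = Sum.inl i then t k (Sum.inl i) m else 0) +
      (if l = Sum.inr i then -t k (Sum.inr i) m else 0) = ((dz i l : ℤ) : ℂ) * t k l m from e2,
    show (if m = Sum.inl i then t k l (Sum.inl i) else 0) +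
      (if m = Sum.inr i then -t k l (Sum.inr i) else 0) = ((dz i m : ℤ) : ℂ) * t k l m from e3]
  unfold wt3
  push_cast
  ring

end B

section C

/-! ### the invariant pairing -/

def bil (s t : Tn N) : ℂ :=
  ∑ k, ∑ l, ∑ m, eps k * eps l * eps m * s k l m * t (sw k) (sw l) (sw m)

lemma collapse1 (c : I N) (F : I N → I N → I N → ℂ) :
    (∑ k, ∑ l, ∑ m, if k = c then F k l m else 0) = ∑ l, ∑ m, F c l m := by
  simp only [Finset.sum_ite_irrel, Finset.sum_const_zero, Finset.sum_ite_eq',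
    Finset.mem_univ, if_true]

lemma collapse2 (c : I N) (F : I N → I N → I N → ℂ) :
    (∑ k, ∑ l, ∑ m, if l = c then F k l m else 0) = ∑ k, ∑ m, F k c m := by
  simp only [Finset.sum_ite_irrel, Finset.sum_const_zero, Finset.sum_ite_eq',
    Finset.mem_univ, if_true]

lemma collapse3 (c : I N) (F : I N → I N → I N → ℂ) :
    (∑ k, ∑ l, ∑ m, if m = c then F k l m else 0) = ∑ k, ∑ l, F k l c := by
  simp only [Finset.sum_ite_irrel, Finset.sum_const_zero, Finset.sum_ite_eq',
    Finset.mem_univ, if_true]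

lemma dsum_add (F G : I N → I N → ℂ) :
    (∑ x, ∑ y, F x y) + (∑ x, ∑ y, G x y) = ∑ x, ∑ y, (F x y + G x y) := by
  rw [← Finset.sum_add_distrib]
  exact Finset.sum_congr rfl fun x _ => by rw [← Finset.sum_add_distrib]

lemma bil_rho_left (a b : ℂ) (p q : I N) (s t : Tn N) :
    bil (rho (gen a b p q) s) t =
      (∑ l, ∑ m, (-a) * (eps q * eps l * eps m * s p l m * t (sw q) (sw l) (sw m)))
    + (∑ l, ∑ m, (-b) * (eps (sw p) * eps l * eps m * s (sw q) l m * t p (sw l) (sw m)))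
    + (∑ k, ∑ m, (-a) * (eps k * eps q * eps m * s k p m * t (sw k) (sw q) (sw m)))
    + (∑ k, ∑ m, (-b) * (eps k * eps (sw p) * eps m * s k (sw q) m * t (sw k) p (sw m)))
    + (∑ k, ∑ l, (-a) * (eps k * eps l * eps q * s k l p * t (sw k) (sw l) (sw q)))
    + (∑ k, ∑ l, (-b) * (eps k * eps l * eps (sw p) * s k l (sw q) * t (sw k) (sw l) p)) := by
  have hpt : ∀ k l m : I N,
      eps k * eps l * eps m * rho (gen a b p q) s k l m * t (sw k) (sw l) (sw m) =
      (if k = q then (-a) * (eps k * eps l * eps m * s p l m * t (sw k) (sw l) (sw m)) else 0)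
    + (if k = sw p then (-b) * (eps k * eps l * eps m * s (sw q) l m * t (sw k) (sw l) (sw m)) else 0)
    + (if l = q then (-a) * (eps k * eps l * eps m * s k p m * t (sw k) (sw l) (sw m)) else 0)
    + (if l = sw p then (-b) * (eps k * eps l * eps m * s k (sw q) m * t (sw k) (sw l) (sw m)) else 0)
    + (if m = q then (-a) * (eps k * eps l * eps m * s k l p * t (sw k) (sw l) (sw m)) else 0)
    + (if m = sw p then (-b) * (eps k * eps l * eps m * s k l (sw q) * t (sw k) (sw l) (sw m)) else 0) := by
    intro k l m; rw [rho_gen]; split_ifs <;> ring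
  rw [bil]
  rw [Finset.sum_congr rfl fun k _ => Finset.sum_congr rfl fun l _ =>
    Finset.sum_congr rfl fun m _ => hpt k l m]
  simp only [Finset.sum_add_distrib]
  rw [collapse1 q, collapse1 (sw p), collapse2 q, collapse2 (sw p), collapse3 q,
    collapse3 (sw p)]
  simp only [sw_sw]

lemma bil_rho_right (a b : ℂ) (p q : I N) (s t : Tn N) :
    bil s (rho (gen a b p q) t) =
      (∑ l, ∑ m, (-a) * (eps (sw q) * eps l * eps m * s (sw q) l m * t p (sw l) (sw m)))
    + (∑ l, ∑ m, (-b) * (eps p * eps l * eps m * s p l m * t (sw q) (sw l) (sw m)))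
    + (∑ k, ∑ m, (-a) * (eps k * eps (sw q) * eps m * s k (sw q) m * t (sw k) p (sw m)))
    + (∑ k, ∑ m, (-b) * (eps k * eps p * eps m * s k p m * t (sw k) (sw q) (sw m)))
    + (∑ k, ∑ l, (-a) * (eps k * eps l * eps (sw q) * s k l (sw q) * t (sw k) (sw l) p))
    + (∑ k, ∑ l, (-b) * (eps k * eps l * eps p * s k l p * t (sw k) (sw l) (sw q))) := by
  have hpt : ∀ k l m : I N,
      eps k * eps l * eps m * s k l m * rho (gen a b p q) t (sw k) (sw l) (sw m) =
      (if k = sw q then (-a) * (eps k * eps l * eps m * s k l m * t p (sw l) (sw m)) else 0)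
    + (if k = p then (-b) * (eps k * eps l * eps m * s k l m * t (sw q) (sw l) (sw m)) else 0)
    + (if l = sw q then (-a) * (eps k * eps l * eps m * s k l m * t (sw k) p (sw m)) else 0)
    + (if l = p then (-b) * (eps k * eps l * eps m * s k l m * t (sw k) (sw q) (sw m)) else 0)
    + (if m = sw q then (-a) * (eps k * eps l * eps m * s k l m * t (sw k) (sw l) p) else 0)
    + (if m = p then (-b) * (eps k * eps l * eps m * s k l m * t (sw k) (sw l) (sw q)) else 0) := by
    intro k l m; rw [rho_gen]
    simp only [sw_eq_iff, sw_sw]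
    split_ifs <;> ring
  rw [bil]
  rw [Finset.sum_congr rfl fun k _ => Finset.sum_congr rfl fun l _ =>
    Finset.sum_congr rfl fun m _ => hpt k l m]
  simp only [Finset.sum_add_distrib]
  rw [collapse1 (sw q), collapse1 p, collapse2 (sw q), collapse2 p, collapse3 (sw q),
    collapse3 p]

lemma pair_inv (a b : ℂ) (p q : I N) (hq : a * eps q + b * eps p = 0) (s t : Tn N) :
    bil (rho (gen a b p q) s) t + bil s (rho (gen a b p q) t) = 0 := by
  rw [bil_rho_left, bil_rho_right]
  have c1 : (∑ l, ∑ m, (-a) * (eps q * eps l * eps m * s p l m * t (sw q) (sw l) (sw m)))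
      + (∑ l, ∑ m, (-b) * (eps p * eps l * eps m * s p l m * t (sw q) (sw l) (sw m))) = 0 := by
    rw [dsum_add]
    refine Finset.sum_eq_zero fun l _ => Finset.sum_eq_zero fun m _ => ?_
    linear_combination (-(eps l * eps m * s p l m * t (sw q) (sw l) (sw m))) * hq
  have c2 : (∑ l, ∑ m, (-b) * (eps (sw p) * eps l * eps m * s (sw q) l m * t p (sw l) (sw m)))
      + (∑ l, ∑ m, (-a) * (eps (sw q) * eps l * eps m * s (sw q) l m * t p (sw l) (sw m))) = 0 := by
    rw [dsum_add]
    refine Finset.sum_eq_zero fun l _ => Finset.sum_eq_zero fun m _ => ?_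
    rw [eps_sw, eps_sw]
    linear_combination (eps l * eps m * s (sw q) l m * t p (sw l) (sw m)) * hq
  have c3 : (∑ k, ∑ m, (-a) * (eps k * eps q * eps m * s k p m * t (sw k) (sw q) (sw m)))
      + (∑ k, ∑ m, (-b) * (eps k * eps p * eps m * s k p m * t (sw k) (sw q) (sw m))) = 0 := by
    rw [dsum_add]
    refine Finset.sum_eq_zero fun k _ => Finset.sum_eq_zero fun m _ => ?_
    linear_combination (-(eps k * eps m * s k p m * t (sw k) (sw q) (sw m))) * hq
  have c4 : (∑ k, ∑ m, (-b) * (eps k * eps (sw p) * eps m * s k (sw q) m * t (sw k) p (sw m)))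
      + (∑ k, ∑ m, (-a) * (eps k * eps (sw q) * eps m * s k (sw q) m * t (sw k) p (sw m))) = 0 := by
    rw [dsum_add]
    refine Finset.sum_eq_zero fun k _ => Finset.sum_eq_zero fun m _ => ?_
    rw [eps_sw, eps_sw]
    linear_combination (eps k * eps m * s k (sw q) m * t (sw k) p (sw m)) * hq
  have c5 : (∑ k, ∑ l, (-a) * (eps k * eps l * eps q * s k l p * t (sw k) (sw l) (sw q)))
      + (∑ k, ∑ l, (-b) * (eps k * eps l * eps p * s k l p * t (sw k) (sw l) (sw q))) = 0 := by
    rw [dsum_add]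
    refine Finset.sum_eq_zero fun k _ => Finset.sum_eq_zero fun l _ => ?_
    linear_combination (-(eps k * eps l * s k l p * t (sw k) (sw l) (sw q))) * hq
  have c6 : (∑ k, ∑ l, (-b) * (eps k * eps l * eps (sw p) * s k l (sw q) * t (sw k) (sw l) p))
      + (∑ k, ∑ l, (-a) * (eps k * eps l * eps (sw q) * s k l (sw q) * t (sw k) (sw l) p)) = 0 := by
    rw [dsum_add]
    refine Finset.sum_eq_zero fun k _ => Finset.sum_eq_zero fun l _ => ?_
    rw [eps_sw, eps_sw]
    linear_combination (eps k * eps l * s k l (sw q) * t (sw k) (sw l) p) * hq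
  linear_combination c1 + c2 + c3 + c4 + c5 + c6

lemma bil_corner (z : Fin N) : bil (corner (Sum.inr z)) (corner (Sum.inl z)) = -1 := by
  rw [bil]
  have hpt : ∀ k l m : I N,
      eps k * eps l * eps m * corner (Sum.inr z) k l m *
        corner (Sum.inl z) (sw k) (sw l) (sw m) =
      if k = Sum.inr z then (if l = Sum.inr z then (if m = Sum.inr z then
        (eps k * eps l * eps m *
          ((if sw k = Sum.inl z then (1:ℂ) else 0) * (if sw l = Sum.inl z then 1 else 0) *
            (if sw m = Sum.inl z then 1 else 0))) else 0) else 0) else 0 := by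
    intro k l m
    unfold corner
    split_ifs <;> ring
  rw [Finset.sum_congr rfl fun k _ => Finset.sum_congr rfl fun l _ =>
    Finset.sum_congr rfl fun m _ => hpt k l m]
  simp only [Finset.sum_ite_irrel, Finset.sum_const_zero, Finset.sum_ite_eq',
    Finset.mem_univ, if_true]
  norm_num

end C

section D

variable (P : Submodule ℂ (Tn N))

/-- closure hypothesis under the action of our symplectic matrices -/
def Closed : Prop :=
  ∀ a b : ℂ, ∀ p q : I N, a * eps p + b * eps q = 0 → a * eps q + b * eps p = 0 →
    ∀ t ∈ P, rho (gen a b p q) t ∈ P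

variable {P}

lemma closed_genA (hcl : Closed P) (i : Fin N) {t : Tn N} (ht : t ∈ P) :
    rho (genA i) t ∈ P := by
  have := hcl (1/2) (1/2) (Sum.inr i) (Sum.inl i) (by simp) (by simp) t ht
  exact this

lemma closed_genB (hcl : Closed P) (z j : Fin N) {t : Tn N} (ht : t ∈ P) :
    rho (genB z j) t ∈ P := by
  have := hcl (-1) 1 (Sum.inl j) (Sum.inl z) (by simp) (by simp) t ht
  exact this

lemma closed_genH (hcl : Closed P) (i : Fin N) {t : Tn N} (ht : t ∈ P) :
    rho (genH i) t ∈ P := by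
  have := hcl 1 (-1) (Sum.inl i) (Sum.inl i) (by simp) (by simp) t ht
  exact this

lemma closed_genF (hcl : Closed P) (z : Fin N) {t : Tn N} (ht : t ∈ P) :
    rho (genF z) t ∈ P := by
  have := hcl (1/2) (1/2) (Sum.inl z) (Sum.inr z) (by simp) (by simp) t ht
  exact this

lemma mem_mul_wt3 (hcl : Closed P) (i : Fin N) {t : Tn N} (ht : t ∈ P) :
    (fun k l m => ((wt3 i k l m : ℤ) : ℂ) * t k l m) ∈ P := by
  have h := closed_genH hcl i ht
  have hEq : (fun k l m => ((wt3 i k l m : ℤ) : ℂ) * t k l m)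
      = (-1 : ℂ) • rho (genH i) t := by
    funext k l m
    simp only [Pi.smul_apply, smul_eq_mul, rho_genH]
    ring
  rw [hEq]
  exact Submodule.smul_mem P _ h

lemma filt_list (hcl : Closed P) (i : Fin N) :
    ∀ (bs : List ℤ) (t : Tn N), t ∈ P →
      (fun k l m => ((bs.map (fun b => ((wt3 i k l m - b : ℤ) : ℂ))).prod * t k l m)) ∈ P := by
  intro bs
  induction bs with
  | nil =>
      intro t ht
      have : (fun (k l m : I N) =>
          ((List.map (fun b => ((wt3 i k l m - b : ℤ) : ℂ)) []).prod * t k l m)) = t := by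
        funext k l m; simp
      rw [this]; exact ht
  | cons b bs ih =>
      intro t ht
      have h1 : (fun k l m => ((wt3 i k l m - b : ℤ) : ℂ) * t k l m) ∈ P := by
        have h2 := mem_mul_wt3 hcl i ht
        have h3 : (fun k l m => ((wt3 i k l m - b : ℤ) : ℂ) * t k l m)
            = (fun k l m => ((wt3 i k l m : ℤ) : ℂ) * t k l m) + (-(b : ℂ)) • t := by
          funext k l m
          simp only [Pi.add_apply, Pi.smul_apply, smul_eq_mul]
          push_cast
          ring
        rw [h3]
        exact Submodule.add_mem P h2 (Submodule.smul_mem P _ ht)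
      have h4 := ih _ h1
      have h5 : (fun k l m =>
            ((List.map (fun c => ((wt3 i k l m - c : ℤ) : ℂ)) (b :: bs)).prod * t k l m))
          = fun k l m => ((List.map (fun c => ((wt3 i k l m - c : ℤ) : ℂ)) bs).prod *
              (((wt3 i k l m - b : ℤ) : ℂ) * t k l m)) := by
        funext k l m
        simp only [List.map_cons, List.prod_cons]
        ring
      rw [h5]
      exact h4

lemma filt_one (hcl : Closed P) (i : Fin N) (a : ℤ) {t : Tn N} (ht : t ∈ P) :
    (fun k l m => if wt3 i k l m = a then t k l m else 0) ∈ P := by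
  classical
  set bs : List ℤ := ([-3, -2, -1, 0, 1, 2, 3] : List ℤ).filter (fun b => b ≠ a) with hbs
  have hmem := filt_list hcl i bs t ht
  set c : ℂ := ((bs.map (fun b => ((a - b : ℤ) : ℂ))).prod) with hc
  have hne : ∀ b ∈ bs, b ≠ a := by
    intro b hb
    rw [hbs, List.mem_filter] at hb
    simpa using hb.2
  have hc0 : c ≠ 0 := by
    rw [hc]
    apply List.prod_ne_zero
    intro h0
    rw [List.mem_map] at h0
    obtain ⟨b, hb, hb0⟩ := h0
    have : (a - b : ℤ) = 0 := by exact_mod_cast hb0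
    exact hne b hb (by omega)
  have key : (fun k l m => if wt3 i k l m = a then t k l m else 0)
      = c⁻¹ • (fun k l m => ((bs.map (fun b => ((wt3 i k l m - b : ℤ) : ℂ))).prod * t k l m)) := by
    funext k l m
    simp only [Pi.smul_apply, smul_eq_mul]
    by_cases h : wt3 i k l m = a
    · rw [if_pos h, h, ← hc, ← mul_assoc, inv_mul_cancel₀ hc0, one_mul]
    · rw [if_neg h]
      have hb1 := wt3_bound i k l m
      have hin : wt3 i k l m ∈ bs := by
        rw [hbs, List.mem_filter]
        constructor
        · have : wt3 i k l m = -3 ∨ wt3 i k l m = -2 ∨ wt3 i k l m = -1 ∨ wt3 i k l m = 0 ∨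
              wt3 i k l m = 1 ∨ wt3 i k l m = 2 ∨ wt3 i k l m = 3 := by omega
          simp only [List.mem_cons, List.not_mem_nil, or_false]
          tauto
        · simpa using h
      have hzero : ((bs.map (fun b => ((wt3 i k l m - b : ℤ) : ℂ))).prod) = 0 := by
        apply List.prod_eq_zero
        rw [List.mem_map]
        exact ⟨wt3 i k l m, hin, by simp⟩
      rw [hzero, zero_mul, mul_zero]
  rw [key]
  exact Submodule.smul_mem P _ hmem

lemma filt_many (hcl : Closed P) (lam : Fin N → ℤ) :
    ∀ (ls : List (Fin N)) (t : Tn N), t ∈ P →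
      (fun k l m => if (∀ i ∈ ls, wt3 i k l m = lam i) then t k l m else 0) ∈ P := by
  intro ls
  induction ls with
  | nil =>
      intro t ht
      have : (fun (k l m : I N) =>
          if (∀ i ∈ ([] : List (Fin N)), wt3 i k l m = lam i) then t k l m else 0) = t := by
        funext k l m; simp
      rw [this]; exact ht
  | cons i ls ih =>
      intro t ht
      have h1 := filt_one hcl i (lam i) (ih t ht)
      have h2 : (fun k l m => if (∀ j ∈ (i :: ls), wt3 j k l m = lam j) then t k l m else 0)
          = fun k l m => if wt3 i k l m = lam i then
              (if (∀ j ∈ ls, wt3 j k l m = lam j) then t k l m else 0) else 0 := by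
        funext k l m
        simp only [List.forall_mem_cons]
        split_ifs with h3 h4 h5 <;> first | rfl | tauto
      rw [h2]
      exact h1

lemma proj (hcl : Closed P) {t : Tn N} (ht : t ∈ P) (h0 : t ≠ 0) :
    ∃ lam t', t' ∈ P ∧ t' ≠ 0 ∧ WV lam t' := by
  obtain ⟨k0, l0, m0, hK⟩ := exists_ne_zero t h0
  classical
  set lam : Fin N → ℤ := fun i => wt3 i k0 l0 m0 with hlam
  refine ⟨lam, _, filt_many hcl lam (List.finRange N) t ht, ?_, ?_⟩
  · intro hEq
    apply hK
    have h2 := congrFun (congrFun (congrFun hEq k0) l0) m0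
    simp only [Pi.zero_apply] at h2
    simp at h2
    exact h2 (fun i => rfl)
  · intro k l m hne i
    by_cases hcond : ∀ j ∈ List.finRange N, wt3 j k l m = lam j
    · exact hcond i (List.mem_finRange i)
    · exfalso; apply hne; simp only [if_neg hcond]

end D

section E

lemma kill (t : Tn N) (hs : SymT t) (u w : I N)
    (h : ∀ k l m, (if k = u then t w l m else 0) + (if l = u then t k w m else 0) +
      (if m = u then t k l w else 0) = 0) :
    ∀ l m, t w l m = 0 := by
  obtain ⟨h12, h23⟩ := hs
  have h13 : ∀ k l m, t k l m = t m l k := fun k l m =>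
    (h23 k l m).trans ((h12 k m l).trans (h23 m k l))
  intro l m
  by_cases hl : l = u <;> by_cases hm : m = u
  · rw [hl, hm]
    have he := h u u u
    rw [if_pos rfl, if_pos rfl, if_pos rfl] at he
    have e1 : t u w u = t w u u := h12 u w u
    have e2 : t u u w = t w u u := h13 u u w
    rw [e1, e2] at he
    have h4 : (3 : ℂ) * t w u u = 0 := by linear_combination he
    have h3 : (3 : ℂ) ≠ 0 := by norm_num
    exact (mul_eq_zero.mp h4).resolve_left h3
  · rw [hl]
    have he := h u u m
    rw [if_pos rfl, if_pos rfl, if_neg hm] at he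
    rw [h12 u w m] at he
    have h4 : (2 : ℂ) * t w u m = 0 := by linear_combination he
    have h3 : (2 : ℂ) ≠ 0 := by norm_num
    exact (mul_eq_zero.mp h4).resolve_left h3
  · rw [hm]
    have he := h u l u
    rw [if_pos rfl, if_neg hl, if_pos rfl] at he
    rw [h13 u l w] at he
    have h4 : (2 : ℂ) * t w l u = 0 := by linear_combination he
    have h3 : (2 : ℂ) ≠ 0 := by norm_num
    exact (mul_eq_zero.mp h4).resolve_left h3
  · have he := h u l m
    rw [if_pos rfl, if_neg hl, if_neg hm] at he
    simpa using he

lemma hw (z : Fin N) (t : Tn N) (hs : SymT t)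
    (hA : ∀ i, rho (genA i) t = 0)
    (hB : ∀ j, j ≠ z → rho (genB z j) t = 0) :
    ∀ k l m, ¬(k = Sum.inl z ∧ l = Sum.inl z ∧ m = Sum.inl z) → t k l m = 0 := by
  obtain ⟨h12, h23⟩ := hs
  have h13 : ∀ k l m, t k l m = t m l k := fun k l m =>
    (h23 k l m).trans ((h12 k m l).trans (h23 m k l))
  have step1 : ∀ (i : Fin N) l m, t (Sum.inr i) l m = 0 := by
    intro i
    apply kill t ⟨h12, h23⟩ (Sum.inl i) (Sum.inr i)
    intro k l m
    have h := congrFun (congrFun (congrFun (hA i) k) l) m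
    rw [rho_genA] at h
    simp only [Pi.zero_apply] at h
    have h2 := neg_eq_zero.mp h
    linear_combination h2
  have step1b : ∀ (i : Fin N) k m, t k (Sum.inr i) m = 0 := by
    intro i k m
    rw [h12 k (Sum.inr i) m]
    exact step1 i k m
  have step1c : ∀ (i : Fin N) k l, t k l (Sum.inr i) = 0 := by
    intro i k l
    rw [h13 k l (Sum.inr i)]
    exact step1 i l k
  have step2 : ∀ j, j ≠ z → ∀ l m, t (Sum.inl j) l m = 0 := by
    intro j hjz
    apply kill t ⟨h12, h23⟩ (Sum.inl z) (Sum.inl j)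
    intro k l m
    have h := congrFun (congrFun (congrFun (hB j hjz) k) l) m
    rw [rho_genB] at h
    simp only [Pi.zero_apply, step1, step1b, step1c, ite_self] at h
    linear_combination h
  intro k l m hne
  rcases k with ki | ki
  · by_cases hk : ki = z
    · rcases l with li | li
      · by_cases hl : li = z
        · rcases m with mi | mi
          · by_cases hm2 : mi = z
            · exact absurd ⟨congrArg Sum.inl hk, congrArg Sum.inl hl,
                congrArg Sum.inl hm2⟩ hne
            · rw [h13]; exact step2 mi hm2 _ _
          · exact step1c mi _ _
        · rw [h12]; exact step2 li hl _ _
      · exact step1b li _ _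
    · exact step2 ki hk _ _
  · exact step1 ki _ _

lemma dzA (r i : Fin N) :
    dz r (Sum.inl i) = dz r (Sum.inr i) + (if r = i then 2 else 0) := by
  by_cases h : i = r
  · subst h; simp [dz]
  · have h2 : ¬ r = i := fun hh => h hh.symm
    simp [dz, h, h2]

lemma shiftA (i : Fin N) (lam : Fin N → ℤ) (t : Tn N) (h : WV lam t) :
    WV (fun r => lam r + (if r = i then 2 else 0)) (rho (genA i) t) := by
  intro k l m hne r
  rw [rho_genA] at hne
  have h3 : (if k = Sum.inl i then t (Sum.inr i) l m else 0) ≠ 0 ∨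
      (if l = Sum.inl i then t k (Sum.inr i) m else 0) ≠ 0 ∨
      (if m = Sum.inl i then t k l (Sum.inr i) else 0) ≠ 0 := by
    by_contra hc
    push_neg at hc
    apply hne
    rw [hc.1, hc.2.1, hc.2.2]
    ring
  rcases h3 with h4 | h4 | h4
  · split_ifs at h4 with hk
    · subst hk
      have h5 := h _ _ _ h4 r
      show wt3 r (Sum.inl i) l m = lam r + _
      rw [← h5]; unfold wt3; rw [dzA r i]; ring
    · exact absurd rfl h4
  · split_ifs at h4 with hk
    · subst hk
      have h5 := h _ _ _ h4 r
      show wt3 r k (Sum.inl i) m = lam r + _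
      rw [← h5]; unfold wt3; rw [dzA r i]; ring
    · exact absurd rfl h4
  · split_ifs at h4 with hk
    · subst hk
      have h5 := h _ _ _ h4 r
      show wt3 r k l (Sum.inl i) = lam r + _
      rw [← h5]; unfold wt3; rw [dzA r i]; ring
    · exact absurd rfl h4

lemma dzB1 (r z j : Fin N) (hjz : j ≠ z) :
    dz r (Sum.inl z) = dz r (Sum.inl j) + (if r = z then 1 else 0) -
      (if r = j then 1 else 0) := by
  rcases eq_or_ne r z with h1 | h1
  · have h2 : r ≠ j := fun hh => hjz (hh.symm.trans h1)
    simp [dz, h1, hjz, Ne.symm hjz, h2, Ne.symm h2] <;> omega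
  · rcases eq_or_ne r j with h2 | h2
    · simp [dz, h1, Ne.symm h1, h2, hjz, Ne.symm hjz] <;> omega
    · simp [dz, h1, Ne.symm h1, h2, Ne.symm h2] <;> omega

lemma dzB2 (r z j : Fin N) (hjz : j ≠ z) :
    dz r (Sum.inr j) = dz r (Sum.inr z) + (if r = z then 1 else 0) -
      (if r = j then 1 else 0) := by
  rcases eq_or_ne r z with h1 | h1
  · have h2 : r ≠ j := fun hh => hjz (hh.symm.trans h1)
    simp [dz, h1, hjz, Ne.symm hjz, h2, Ne.symm h2] <;> omega
  · rcases eq_or_ne r j with h2 | h2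
    · simp [dz, h1, Ne.symm h1, h2, hjz, Ne.symm hjz] <;> omega
    · simp [dz, h1, Ne.symm h1, h2, Ne.symm h2] <;> omega

lemma shiftB (z j : Fin N) (hjz : j ≠ z) (lam : Fin N → ℤ) (t : Tn N) (h : WV lam t) :
    WV (fun r => lam r + (if r = z then 1 else 0) - (if r = j then 1 else 0))
      (rho (genB z j) t) := by
  intro k l m hne r
  rw [rho_genB] at hne
  have h3 : (if k = Sum.inl z then t (Sum.inl j) l m else 0) ≠ 0 ∨
      (if l = Sum.inl z then t k (Sum.inl j) m else 0) ≠ 0 ∨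
      (if m = Sum.inl z then t k l (Sum.inl j) else 0) ≠ 0 ∨
      (if k = Sum.inr j then t (Sum.inr z) l m else 0) ≠ 0 ∨
      (if l = Sum.inr j then t k (Sum.inr z) m else 0) ≠ 0 ∨
      (if m = Sum.inr j then t k l (Sum.inr z) else 0) ≠ 0 := by
    by_contra hc
    push_neg at hc
    apply hne
    rw [hc.1, hc.2.1, hc.2.2.1, hc.2.2.2.1, hc.2.2.2.2.1, hc.2.2.2.2.2]
    ring
  rcases h3 with h4 | h4 | h4 | h4 | h4 | h4 <;> split_ifs at h4 with hk <;>
    first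
    | exact absurd rfl h4
    | (subst hk
       have h5 := h _ _ _ h4 r
       show wt3 _ _ _ _ = (lam r + if r = z then 1 else 0) - (if r = j then 1 else 0)
       rw [← h5]; unfold wt3
       first
       | (rw [dzB1 r z j hjz]; ring)
       | (rw [dzB2 r z j hjz]; ring))

lemma phiA (z i : Fin N) (lam : Fin N → ℤ) :
    Phi z (fun r => lam r + (if r = i then 2 else 0)) =
      Phi z lam + 2 * (if i = z then 2 else 1) := by
  unfold Phi
  simp only [mul_add, Finset.sum_add_distrib, mul_ite, mul_zero,
    Finset.sum_ite_eq', Finset.mem_univ, if_true]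
  split_ifs <;> ring

lemma phiB (z j : Fin N) (lam : Fin N → ℤ) (hjz : j ≠ z) :
    Phi z (fun r => lam r + (if r = z then 1 else 0) - (if r = j then 1 else 0)) =
      Phi z lam + 1 := by
  unfold Phi
  simp only [mul_add, mul_sub, Finset.sum_add_distrib, Finset.sum_sub_distrib, mul_ite,
    mul_zero, mul_one, Finset.sum_ite_eq', Finset.mem_univ, if_true]
  simp [hjz]
  ring

lemma phi_le (z : Fin N) (lam : Fin N → ℤ) (t : Tn N) (h : WV lam t) (h0 : t ≠ 0) :
    Phi z lam ≤ 3 * ((N : ℤ) + 1) := by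
  obtain ⟨k0, l0, m0, hK⟩ := exists_ne_zero t h0
  have hb : ∀ i, lam i ≤ 3 := fun i => by
    rw [← h _ _ _ hK i]; exact (wt3_bound i k0 l0 m0).2
  have h1 : Phi z lam ≤ ∑ i : Fin N, (if i = z then 2 else 1) * 3 := by
    apply Finset.sum_le_sum
    intro i _
    have h2 := hb i
    split_ifs <;> omega
  have h2 : (∑ i : Fin N, ((if i = z then 2 else 1) : ℤ) * 3) = 3 * (N : ℤ) + 3 := by
    have h3 : ∀ i : Fin N, ((if i = z then 2 else 1) : ℤ) * 3 =
        3 + (if i = z then 3 else 0) := by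
      intro i; split_ifs <;> ring
    rw [Finset.sum_congr rfl fun i _ => h3 i, Finset.sum_add_distrib, Finset.sum_const,
      Finset.sum_ite_eq', if_pos (Finset.mem_univ z)]
    simp [Finset.card_univ]
    ring
  omega

lemma main_ind (z : Fin N) {P : Submodule ℂ (Tn N)} (hsym : ∀ t ∈ P, SymT t)
    (hcl : Closed P) :
    ∀ n : ℕ, ∀ (lam : Fin N → ℤ) (t : Tn N), t ∈ P → WV lam t → t ≠ 0 →
      (3 * ((N : ℤ) + 1) - Phi z lam).toNat ≤ n → corner (Sum.inl z) ∈ P := by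
  intro n
  induction n using Nat.strong_induction_on with
  | _ n ih =>
  intro lam t ht hwv h0 hm
  by_cases hA : ∀ i : Fin N, rho (genA i) t = 0
  · by_cases hB : ∀ j : Fin N, j ≠ z → rho (genB z j) t = 0
    · have hhw := hw z t (hsym t ht) hA hB
      have hc : t (Sum.inl z) (Sum.inl z) (Sum.inl z) ≠ 0 := by
        intro hcc
        apply h0
        funext k l m
        show t k l m = 0
        by_cases hx : k = Sum.inl z ∧ l = Sum.inl z ∧ m = Sum.inl z
        · obtain ⟨rfl, rfl, rfl⟩ := hx; exact hcc
        · exact hhw k l m hx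
      have hEq : corner (Sum.inl z) = (t (Sum.inl z) (Sum.inl z) (Sum.inl z))⁻¹ • t := by
        funext k l m
        simp only [corner, Pi.smul_apply, smul_eq_mul]
        by_cases hk : k = Sum.inl z <;> by_cases hl : l = Sum.inl z <;>
          by_cases hm2 : m = Sum.inl z <;>
          first
          | (subst hk; subst hl; subst hm2
             rw [inv_mul_cancel₀ hc]
             simp)
          | (rw [hhw k l m (by tauto), mul_zero]; simp [hk, hl, hm2])
      rw [hEq]
      exact Submodule.smul_mem P _ ht
    · push_neg at hB
      obtain ⟨j, hjz, hj⟩ := hB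
      have ht' : rho (genB z j) t ∈ P := closed_genB hcl z j ht
      have hwv' := shiftB z j hjz lam t hwv
      have hphi := phiB z j lam hjz
      have hle := phi_le z _ _ hwv' hj
      exact ih (3 * ((N : ℤ) + 1) -
        Phi z (fun r => lam r + (if r = z then 1 else 0) - (if r = j then 1 else 0))).toNat
        (by omega) _ _ ht' hwv' hj (le_refl _)
  · push_neg at hA
    obtain ⟨i, hi⟩ := hA
    have ht' : rho (genA i) t ∈ P := closed_genA hcl i ht
    have hwv' := shiftA i lam t hwv
    have hphi := phiA z i lam
    have hle := phi_le z _ _ hwv' hi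
    set c : ℤ := (if i = z then 2 else 1) with hcdef
    have hc2 : (1 : ℤ) ≤ c := by rw [hcdef]; split_ifs <;> omega
    exact ih (3 * ((N : ℤ) + 1) -
      Phi z (fun r => lam r + (if r = i then 2 else 0))).toNat
      (by omega) _ _ ht' hwv' hi (le_refl _)

lemma main_all (z : Fin N) {P : Submodule ℂ (Tn N)} (hsym : ∀ t ∈ P, SymT t)
    (hcl : Closed P) (t : Tn N) (ht : t ∈ P) (h0 : t ≠ 0) :
    corner (Sum.inl z) ∈ P := by
  obtain ⟨lam, t', ht', h0', hwv'⟩ := proj hcl ht h0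
  exact main_ind z hsym hcl (3 * ((N : ℤ) + 1) - Phi z lam).toNat lam t' ht' hwv' h0'
    (le_refl _)

end E

section F

lemma lower (z : Fin N) :
    rho (genF z) (rho (genF z) (rho (genF z) (corner (Sum.inl z)))) =
      (-6 : ℂ) • corner (Sum.inr z) := by
  funext k l m
  simp only [rho_genF, corner, Pi.smul_apply, smul_eq_mul]
  by_cases hk1 : k = Sum.inl z <;> by_cases hk2 : k = Sum.inr z <;>
    by_cases hl1 : l = Sum.inl z <;> by_cases hl2 : l = Sum.inr z <;>
      by_cases hm1 : m = Sum.inl z <;> by_cases hm2 : m = Sum.inr z <;>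
        simp_all <;> norm_num

lemma corner_from_lower (z : Fin N) {P : Submodule ℂ (Tn N)} (hcl : Closed P)
    (h : corner (Sum.inl z) ∈ P) : corner (Sum.inr z) ∈ P := by
  have h3 : rho (genF z) (rho (genF z) (rho (genF z) (corner (Sum.inl z)))) ∈ P :=
    closed_genF hcl z (closed_genF hcl z (closed_genF hcl z h))
  rw [lower] at h3
  have h4 := Submodule.smul_mem P (-6 : ℂ)⁻¹ h3
  rw [smul_smul] at h4
  norm_num at h4
  exact h4
end F

section G

lemma om_add_left (u u' w : Vv N) : om (u + u') w = om u w + om u' w := by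
  unfold om
  rw [← Finset.sum_add_distrib]
  exact Finset.sum_congr rfl fun k _ => by simp only [Pi.add_apply]; ring

lemma om_sub_left (u u' w : Vv N) : om (u - u') w = om u w - om u' w := by
  unfold om
  rw [← Finset.sum_sub_distrib]
  exact Finset.sum_congr rfl fun k _ => by simp only [Pi.sub_apply]; ring

lemma om_smul_left (c : ℂ) (u w : Vv N) : om (c • u) w = c * om u w := by
  unfold om
  rw [Finset.mul_sum]
  exact Finset.sum_congr rfl fun k _ => by simp only [Pi.smul_apply, smul_eq_mul]; ring

lemma om_sum_left (c : I N → ℂ) (f : I N → Vv N) (w : Vv N) :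
    om (∑ j, c j • f j) w = ∑ j, c j * om (f j) w := by
  unfold om
  have h1 : ∀ k : I N, eps k * ((∑ j, c j • f j) k) * w (sw k) =
      ∑ j, c j * (eps k * f j k * w (sw k)) := by
    intro k
    rw [Finset.sum_apply]
    simp only [Pi.smul_apply, smul_eq_mul]
    rw [Finset.mul_sum, Finset.sum_mul]
    exact Finset.sum_congr rfl fun j _ => by ring
  rw [Finset.sum_congr rfl fun k _ => h1 k, Finset.sum_comm]
  exact Finset.sum_congr rfl fun j _ => (Finset.mul_sum _ _ _).symm

lemma mulVec_dd (x : Matrix (I N) (I N) ℂ) (m : I N) :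
    x.mulVec (dd m) = fun r => x r m := by
  funext r
  rw [Matrix.mulVec]
  simp only [dotProduct, dd, mul_ite, mul_one, mul_zero]
  rw [Finset.sum_ite_eq]
  simp

lemma mulVec_dd_expand (x : Matrix (I N) (I N) ℂ) (k : I N) :
    x.mulVec (dd k) = ∑ j, (x j k) • dd j := by
  funext r
  rw [mulVec_dd, Finset.sum_apply]
  simp only [Pi.smul_apply, smul_eq_mul, dd, mul_ite, mul_one, mul_zero]
  rw [Finset.sum_ite_eq']
  simp

lemma om_mulVec_dd (u : Vv N) (x : Matrix (I N) (I N) ℂ) (m : I N) :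
    om u (x.mulVec (dd m)) = ∑ j, x j m * om u (dd j) := by
  rw [mulVec_dd x m]
  have h2 : ∀ j : I N, x j m * om u (dd j) = x j m * (eps (sw j) * u (sw j)) := fun j => by
    rw [om_dd_right]
  rw [Finset.sum_congr rfl fun j _ => h2 j]
  rw [show (∑ j, x j m * (eps (sw j) * u (sw j))) =
    ∑ j, x (sw j) m * (eps (sw (sw j)) * u (sw (sw j))) from
    (sum_sw (fun j => x j m * (eps (sw j) * u (sw j)))).symm]
  simp only [sw_sw, om]
  exact Finset.sum_congr rfl fun k _ => by ring

lemma lact (x : Matrix (I N) (I N) ℂ)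
    (hsp : ∀ v w, om (x.mulVec v) w + om v (x.mulVec w) = 0)
    (B : Vv N →ₗ[ℂ] Vv N →ₗ[ℂ] Vv N) :
    (fun k l m => om (x.mulVec (B (dd k) (dd l)) - B (x.mulVec (dd k)) (dd l) -
        B (dd k) (x.mulVec (dd l))) (dd m)) =
      rho x (fun k l m => om (B (dd k) (dd l)) (dd m)) := by
  funext k l m
  rw [om_sub_left, om_sub_left]
  have hT1 : om (x.mulVec (B (dd k) (dd l))) (dd m)
      = -∑ j, x j m * om (B (dd k) (dd l)) (dd j) := by
    have h := hsp (B (dd k) (dd l)) (dd m)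
    have h2 : om (x.mulVec (B (dd k) (dd l))) (dd m)
        = -om (B (dd k) (dd l)) (x.mulVec (dd m)) := by linear_combination h
    rw [h2, om_mulVec_dd]
  have hT2 : om (B (x.mulVec (dd k)) (dd l)) (dd m)
      = ∑ j, x j k * om (B (dd j) (dd l)) (dd m) := by
    rw [mulVec_dd_expand x k, map_sum]
    simp only [map_smul, LinearMap.sum_apply, LinearMap.smul_apply]
    exact om_sum_left (fun j => x j k) (fun j => B (dd j) (dd l)) (dd m)
  have hT3 : om (B (dd k) (x.mulVec (dd l))) (dd m)
      = ∑ j, x j l * om (B (dd k) (dd j)) (dd m) := by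
    rw [mulVec_dd_expand x l, map_sum]
    simp only [map_smul]
    exact om_sum_left (fun j => x j l) (fun j => B (dd k) (dd j)) (dd m)
  rw [hT1, hT2, hT3]
  simp only [rho]
  ring

def symS (N : ℕ) : Submodule ℂ (Tn N) where
  carrier := {t | SymT t}
  add_mem' := by
    rintro a b ⟨ha1, ha2⟩ ⟨hb1, hb2⟩
    constructor
    · intro k l m
      show a k l m + b k l m = a l k m + b l k m
      rw [ha1 k l m, hb1 k l m]
    · intro k l m
      show a k l m + b k l m = a k m l + b k m l
      rw [ha2 k l m, hb2 k l m]
  zero_mem' := ⟨fun _ _ _ => rfl, fun _ _ _ => rfl⟩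
  smul_mem' := by
    rintro c a ⟨ha1, ha2⟩
    constructor
    · intro k l m
      show c * a k l m = c * a l k m
      rw [ha1 k l m]
    · intro k l m
      show c * a k l m = c * a k m l
      rw [ha2 k l m]

lemma mem_symS {t : Tn N} : t ∈ symS N ↔ SymT t := Iff.rfl

def Lmap : (Vv N →ₗ[ℂ] Vv N →ₗ[ℂ] Vv N) →ₗ[ℂ] Tn N where
  toFun B := fun k l m => om (B (dd k) (dd l)) (dd m)
  map_add' B B' := by
    funext k l m
    show om ((B + B') (dd k) (dd l)) (dd m) = _
    simp only [LinearMap.add_apply]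
    rw [om_add_left]
    rfl
  map_smul' c B := by
    funext k l m
    show om ((c • B) (dd k) (dd l)) (dd m) = _
    simp only [LinearMap.smul_apply]
    rw [om_smul_left]
    rfl

lemma dd_def (k : I N) : (fun r => if k = r then (1 : ℂ) else 0) = dd k := rfl

lemma Lmap_inj : Function.Injective (Lmap (N := N)) := by
  intro B1 B2 hEq
  have hz : ∀ k l, B1 (dd k) (dd l) = B2 (dd k) (dd l) := by
    intro k l
    have h4 : B1 (dd k) (dd l) - B2 (dd k) (dd l) = 0 := by
      apply om_eq_zero_iff
      intro m
      rw [om_sub_left]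
      have h1 : om (B1 (dd k) (dd l)) (dd m) = om (B2 (dd k) (dd l)) (dd m) :=
        congrFun (congrFun (congrFun hEq k) l) m
      rw [h1, sub_self]
    exact sub_eq_zero.mp h4
  apply LinearMap.ext; intro v; apply LinearMap.ext; intro w
  have hv : v = ∑ i, v i • dd i := by
    conv_lhs => rw [pi_eq_sum_univ v]
    exact Finset.sum_congr rfl fun i _ => by rw [dd_def]
  have hwv : w = ∑ i, w i • dd i := by
    conv_lhs => rw [pi_eq_sum_univ w]
    exact Finset.sum_congr rfl fun i _ => by rw [dd_def]
  rw [hv, hwv]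
  simp only [map_sum, map_smul, LinearMap.sum_apply, LinearMap.smul_apply, hz]

def bilinM : Tn N →ₗ[ℂ] Tn N →ₗ[ℂ] ℂ :=
  LinearMap.mk₂ ℂ bil
    (fun s s' t => by
      unfold bil
      rw [← Finset.sum_add_distrib]
      refine Finset.sum_congr rfl fun k _ => ?_
      rw [← Finset.sum_add_distrib]
      refine Finset.sum_congr rfl fun l _ => ?_
      rw [← Finset.sum_add_distrib]
      refine Finset.sum_congr rfl fun m _ => ?_
      simp only [Pi.add_apply]
      ring)
    (fun c s t => by
      unfold bil
      simp only [smul_eq_mul, Pi.smul_apply]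
      rw [Finset.mul_sum]
      refine Finset.sum_congr rfl fun k _ => ?_
      rw [Finset.mul_sum]
      refine Finset.sum_congr rfl fun l _ => ?_
      rw [Finset.mul_sum]
      refine Finset.sum_congr rfl fun m _ => ?_
      ring)
    (fun s t t' => by
      unfold bil
      rw [← Finset.sum_add_distrib]
      refine Finset.sum_congr rfl fun k _ => ?_
      rw [← Finset.sum_add_distrib]
      refine Finset.sum_congr rfl fun l _ => ?_
      rw [← Finset.sum_add_distrib]
      refine Finset.sum_congr rfl fun m _ => ?_
      simp only [Pi.add_apply]
      ring)
    (fun c s t => by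
      unfold bil
      simp only [smul_eq_mul, Pi.smul_apply]
      rw [Finset.mul_sum]
      refine Finset.sum_congr rfl fun k _ => ?_
      rw [Finset.mul_sum]
      refine Finset.sum_congr rfl fun l _ => ?_
      rw [Finset.mul_sum]
      refine Finset.sum_congr rfl fun m _ => ?_
      ring)

lemma bilinM_apply (s t : Tn N) : bilinM s t = bil s t := rfl

lemma exists_ortho (U' SymU : Submodule ℂ (Tn N)) (hlt : U' < SymU) :
    ∃ t : Tn N, t ∈ SymU ∧ t ≠ 0 ∧ ∀ u ∈ U', bil u t = 0 := by
  classical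
  by_contra hcon
  push_neg at hcon
  have hginj : Function.Injective
      (((U'.subtype).dualMap).comp ((bilinM.flip).comp SymU.subtype)) := by
    rw [injective_iff_map_eq_zero]
    intro ts h0
    by_cases hts : (ts : Tn N) = 0
    · exact Subtype.ext hts
    · obtain ⟨u, hu, hbu⟩ := hcon ts ts.2 hts
      exfalso
      apply hbu
      have h2 := LinearMap.congr_fun h0 ⟨u, hu⟩
      simpa [bilinM_apply] using h2
  have h1 := LinearMap.finrank_le_finrank_of_injective hginj
  have h2 : Module.finrank ℂ (Module.Dual ℂ U') = Module.finrank ℂ U' :=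
    Subspace.dual_finrank_eq
  have h3 : Module.finrank ℂ U' < Module.finrank ℂ SymU :=
    Submodule.finrank_lt_finrank_of_lt hlt
  omega

end G

end
end SpIrr

open SpIrr in
theorem sp_irreducible_sym2 (N : ℕ) (hN : 1 ≤ N)
    (ω : ((Fin N ⊕ Fin N) → ℂ) → ((Fin N ⊕ Fin N) → ℂ) → ℂ)
    (hω : ∀ v w, ω v w =
      ∑ i : Fin N, (v (Sum.inl i) * w (Sum.inr i) - v (Sum.inr i) * w (Sum.inl i)))
    (W : Set (((Fin N ⊕ Fin N) → ℂ) →ₗ[ℂ] ((Fin N ⊕ Fin N) → ℂ) →ₗ[ℂ]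
      ((Fin N ⊕ Fin N) → ℂ)))
    (hW : W = {B | (∀ v w, B v w = B w v) ∧
      ∀ v w u, ω (B v w) u + ω w (B v u) = 0})
    (act : Matrix (Fin N ⊕ Fin N) (Fin N ⊕ Fin N) ℂ →
      (((Fin N ⊕ Fin N) → ℂ) →ₗ[ℂ] ((Fin N ⊕ Fin N) → ℂ) →ₗ[ℂ] ((Fin N ⊕ Fin N) → ℂ)) →
      (((Fin N ⊕ Fin N) → ℂ) →ₗ[ℂ] ((Fin N ⊕ Fin N) → ℂ) →ₗ[ℂ] ((Fin N ⊕ Fin N) → ℂ)))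
    (hact : ∀ x B v w,
      act x B v w = x.mulVec (B v w) - B (x.mulVec v) w - B v (x.mulVec w)) :
    (∃ B ∈ W, B ≠ 0) ∧
      ∀ U : Submodule ℂ (((Fin N ⊕ Fin N) → ℂ) →ₗ[ℂ] ((Fin N ⊕ Fin N) → ℂ) →ₗ[ℂ]
          ((Fin N ⊕ Fin N) → ℂ)),
        (U : Set _) ⊆ W →
        (∀ B ∈ U, ∀ x : Matrix (Fin N ⊕ Fin N) (Fin N ⊕ Fin N) ℂ,
          (∀ v w, ω (x.mulVec v) w + ω v (x.mulVec w) = 0) → act x B ∈ U) →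
        U = ⊥ ∨ (U : Set _) = W := by
  classical
  have z : Fin N := ⟨0, hN⟩
  have hωom : ω = om := by
    funext v w
    have h1 : om v w = ∑ i : Fin N,
        (v (Sum.inl i) * w (Sum.inr i) - v (Sum.inr i) * w (Sum.inl i)) := by
      unfold om
      rw [Fintype.sum_sum_type]
      simp only [eps_inl, eps_inr, sw_inl, sw_inr]
      rw [← Finset.sum_add_distrib]
      exact Finset.sum_congr rfl fun i _ => by ring
    rw [hω, h1]
  have om_dd_left : ∀ (s : I N) (u : Vv N), om (dd s) u = eps s * u (sw s) := by
    intro s u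
    unfold om
    have hpt : ∀ k : I N, eps k * dd s k * u (sw k) =
        if k = s then eps k * u (sw k) else 0 := by
      intro k
      by_cases h : k = s
      · subst h; simp [dd]
      · have h2 : ¬ s = k := fun hh => h hh.symm
        simp [dd, h, h2]
    rw [Finset.sum_congr rfl fun k _ => hpt k, Finset.sum_ite_eq']
    simp
  have om_smul_right : ∀ (c : ℂ) (u w : Vv N), om u (c • w) = c * om u w := by
    intro c u w
    unfold om
    rw [Finset.mul_sum]
    exact Finset.sum_congr rfl fun k _ => by simp only [Pi.smul_apply, smul_eq_mul]; ring
  -- the nonzero element of W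
  set B0 : Vv N →ₗ[ℂ] Vv N →ₗ[ℂ] Vv N := LinearMap.mk₂ ℂ
      (fun v w => (-(v (Sum.inl z) * w (Sum.inl z))) • dd (Sum.inr z))
      (fun v v' w => by
        funext r
        simp only [Pi.add_apply, Pi.smul_apply, smul_eq_mul]
        ring)
      (fun c v w => by
        funext r
        simp only [Pi.smul_apply, smul_eq_mul]
        ring)
      (fun v w w' => by
        funext r
        simp only [Pi.add_apply, Pi.smul_apply, smul_eq_mul]
        ring)
      (fun c v w => by
        funext r
        simp only [Pi.smul_apply, smul_eq_mul]
        ring) with hB0def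
  have hB0W : B0 ∈ W := by
    rw [hW]
    constructor
    · intro v w
      show ((-(v (Sum.inl z) * w (Sum.inl z))) • dd (Sum.inr z) : Vv N) = _
      show _ = ((-(w (Sum.inl z) * v (Sum.inl z))) • dd (Sum.inr z) : Vv N)
      congr 1
      ring
    · intro v w u
      rw [hωom]
      show om (((-(v (Sum.inl z) * w (Sum.inl z))) • dd (Sum.inr z) : Vv N)) u +
        om w (((-(v (Sum.inl z) * u (Sum.inl z))) • dd (Sum.inr z) : Vv N)) = 0
      rw [om_smul_left, om_dd_left, om_smul_right, om_dd_right]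
      simp only [eps_inr, eps_inl, sw_inr]
      ring
  have hB0ne : B0 ≠ 0 := by
    intro h
    have h2 : B0 (dd (Sum.inl z)) (dd (Sum.inl z)) (Sum.inr z) = 0 := by
      rw [h]; rfl
    have h3 : B0 (dd (Sum.inl z)) (dd (Sum.inl z)) (Sum.inr z) = -1 := by
      show ((-(dd (Sum.inl z) (Sum.inl z) * dd (Sum.inl z) (Sum.inl z))) •
        dd (Sum.inr z) : Vv N) (Sum.inr z) = -1
      simp [dd]
    rw [h3] at h2
    norm_num at h2
  refine ⟨⟨B0, hB0W, hB0ne⟩, ?_⟩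
  intro U hUW hUact
  by_cases hUbot : U = ⊥
  · exact Or.inl hUbot
  refine Or.inr ?_
  set U' : Submodule ℂ (Tn N) := Submodule.map Lmap U with hU'
  have hLW : ∀ B, B ∈ W → SymT (Lmap B) := by
    intro B hB
    rw [hW] at hB
    obtain ⟨hB1, hB2⟩ := hB
    constructor
    · intro k l m
      show om (B (dd k) (dd l)) (dd m) = om (B (dd l) (dd k)) (dd m)
      rw [hB1]
    · intro k l m
      show om (B (dd k) (dd l)) (dd m) = om (B (dd k) (dd m)) (dd l)
      have h2 := hB2 (dd k) (dd l) (dd m)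
      rw [hωom] at h2
      have h3 : om (dd l) (B (dd k) (dd m)) = -om (B (dd k) (dd m)) (dd l) :=
        om_antisymm _ _
      linear_combination h2 - h3
  have hU'sym : ∀ t ∈ U', SymT t := by
    intro t ht
    rw [hU', Submodule.mem_map] at ht
    obtain ⟨B, hB, rfl⟩ := ht
    exact hLW B (hUW hB)
  have hU'cl : Closed U' := by
    intro a b p q h1 h2 t ht
    rw [hU', Submodule.mem_map] at ht
    obtain ⟨B, hB, rfl⟩ := ht
    have hspω : ∀ v w, ω ((gen a b p q).mulVec v) w + ω v ((gen a b p q).mulVec w) = 0 := by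
      intro v w; rw [hωom]; exact gen_sp a b p q h1 v w
    have hBnew : act (gen a b p q) B ∈ U := hUact B hB (gen a b p q) hspω
    rw [hU', Submodule.mem_map]
    refine ⟨act (gen a b p q) B, hBnew, ?_⟩
    have hsp : ∀ v w, om ((gen a b p q).mulVec v) w + om v ((gen a b p q).mulVec w) = 0 :=
      gen_sp a b p q h1
    have hle := lact (gen a b p q) hsp B
    have hEq : Lmap (act (gen a b p q) B) = (fun k l m =>
        om ((gen a b p q).mulVec (B (dd k) (dd l)) - B ((gen a b p q).mulVec (dd k)) (dd l) -
          B (dd k) ((gen a b p q).mulVec (dd l))) (dd m)) := by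
      funext k l m
      show om ((act (gen a b p q) B) (dd k) (dd l)) (dd m) = _
      rw [hact]
    rw [hEq, hle]
    rfl
  obtain ⟨B1, hB1U, hB1ne⟩ : ∃ B1 ∈ U, B1 ≠ 0 := by
    by_contra hcc
    push_neg at hcc
    apply hUbot
    rw [eq_bot_iff]
    intro B hB
    simpa using hcc B hB
  have hL1 : Lmap B1 ∈ U' := by
    rw [hU', Submodule.mem_map]; exact ⟨B1, hB1U, rfl⟩
  have hL1ne : Lmap B1 ≠ 0 := by
    intro h
    apply hB1ne
    apply Lmap_inj
    rw [h, map_zero]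
  have hcornerA : corner (Sum.inl z) ∈ U' := main_all z hU'sym hU'cl _ hL1 hL1ne
  have hcornerB : corner (Sum.inr z) ∈ U' := corner_from_lower z hU'cl hcornerA
  refine Set.Subset.antisymm hUW ?_
  intro B hBW
  by_contra hBU
  have hU'le : U' ≤ symS N := by
    intro t ht
    rw [hU', Submodule.mem_map] at ht
    obtain ⟨B', hB', rfl⟩ := ht
    exact hLW B' (hUW hB')
  have hlt : U' < symS N := by
    refine lt_of_le_of_ne hU'le ?_
    intro hEq2
    have hmem : Lmap B ∈ U' := by
      rw [hEq2]; exact (mem_symS).mpr (hLW B hBW)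
    rw [hU', Submodule.mem_map] at hmem
    obtain ⟨B2, hB2, hB2e⟩ := hmem
    have hB2B : B2 = B := Lmap_inj hB2e
    exact hBU (hB2B ▸ hB2)
  obtain ⟨t0, ht0S, ht0ne, horth⟩ := exists_ortho U' (symS N) hlt
  set Z : Submodule ℂ (Tn N) := symS N ⊓ (⨅ u ∈ U', LinearMap.ker (bilinM u)) with hZ
  have hmemZ : ∀ t : Tn N, (t ∈ Z ↔ (SymT t ∧ ∀ u ∈ U', bil u t = 0)) := by
    intro t
    rw [hZ]
    simp only [Submodule.mem_inf, Submodule.mem_iInf, LinearMap.mem_ker, bilinM_apply]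
    rw [mem_symS]
  have ht0Z : t0 ∈ Z := (hmemZ t0).mpr ⟨ht0S, horth⟩
  have hZsym : ∀ t ∈ Z, SymT t := fun t ht => ((hmemZ t).mp ht).1
  have hZcl : Closed Z := by
    intro a b p q h1 h2 t ht
    obtain ⟨hts, hto⟩ := (hmemZ t).mp ht
    refine (hmemZ _).mpr ⟨rho_symT _ t hts, ?_⟩
    intro u hu
    have hinv := pair_inv a b p q h2 u t
    have hmem2 : rho (gen a b p q) u ∈ U' := hU'cl a b p q h1 h2 u hu
    have h5 := hto _ hmem2
    linear_combination hinv - h5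
  have hcornerAZ : corner (Sum.inl z) ∈ Z := main_all z hZsym hZcl t0 ht0Z ht0ne
  have hfinal := ((hmemZ _).mp hcornerAZ).2 (corner (Sum.inr z)) hcornerB
  rw [bil_corner] at hfinal
  norm_num at hfinal
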